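/- If F is an endpoint-homogeneous fan, then F is X-endpoint-generated for some X ⊆ [0,1]: there exists X ⊆ [0,1] such that for every blade B of F there is a homeomorphism φ : [0,1] → B with φ(0) = t and φ[X] = B ∩ closure(E(F) \ B), where E(F) is the set of endpoints of F and t is the top. -/

import Mathlib

open Set

/-- A subset of a topological space is an *arc* if it is homeomorphic to `[0,1]`. -/
def IsArc {F : Type*} [TopologicalSpace F] (A : Set F) : Prop :=
  Nonempty (A ≃ₜ (Set.Icc (0:ℝ) 1))

/-- `e` is an endpoint of the arc `A`: removing it leaves a connected set. -/
def IsArcEndpoint {F : Type*} [TopologicalSpace F] (A : Set F) (e : F) : Prop :=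
  e ∈ A ∧ IsPreconnected (A \ {e})

/-- A subcontinuum: a nonempty compact connected subset. -/
def IsSubcontinuum {F : Type*} [TopologicalSpace F] (S : Set F) : Prop :=
  IsCompact S ∧ IsConnected S

/-- A *continuum* is a nonempty compact connected metrizable space. -/
def IsContinuum (F : Type*) [TopologicalSpace F] : Prop :=
  Nonempty F ∧ CompactSpace F ∧ ConnectedSpace F ∧ TopologicalSpace.MetrizableSpace F

/-- A *dendroid* is an arcwise connected, hereditarily unicoherent continuum. -/
def IsDendroid (F : Type*) [TopologicalSpace F] : Prop :=
  IsContinuum F ∧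
  (∀ x y : F, x ≠ y → ∃ A : Set F, IsArc A ∧ IsArcEndpoint A x ∧ IsArcEndpoint A y) ∧
  (∀ X A B : Set F, IsSubcontinuum X → IsSubcontinuum A → IsSubcontinuum B →
    A ∪ B = X → IsConnected (A ∩ B))

/-- The standard simple triod in the plane: `([-1,1] × {0}) ∪ ({0} × [0,1])`. -/
def stdTriod : Set (ℝ × ℝ) :=
  (Set.Icc (-1:ℝ) 1) ×ˢ ({0} : Set ℝ) ∪ ({0} : Set ℝ) ×ˢ Set.Icc (0:ℝ) 1

/-- `S` has exactly three connected components. -/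
def HasThreeComponents {F : Type*} [TopologicalSpace F] (S : Set F) : Prop :=
  ∃ C : Fin 3 → Set F, Function.Injective C ∧
    (∀ i, ∃ y ∈ S, C i = connectedComponentIn S y) ∧
    (∀ y ∈ S, ∃ i, connectedComponentIn S y = C i)

/-- `x` is a *ramification point*: the top of some simple triod contained in the space. -/
def IsRamificationPoint {F : Type*} [TopologicalSpace F] (x : F) : Prop :=
  ∃ T : Set F, Nonempty (T ≃ₜ stdTriod) ∧ x ∈ T ∧ HasThreeComponents (T \ {x})

/-- A *fan* is a dendroid with exactly one ramification point `t`, its top. -/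
def IsFan (F : Type*) [TopologicalSpace F] (t : F) : Prop :=
  IsDendroid F ∧ IsRamificationPoint t ∧ ∀ x : F, IsRamificationPoint x → x = t

/-- The endpoints of a dendroid: points that are endpoints of every arc containing them. -/
def Endpoints (F : Type*) [TopologicalSpace F] : Set F :=
  {x | ∀ A : Set F, IsArc A → x ∈ A → IsPreconnected (A \ {x})}

/-- A *blade* of a fan with top `t`: the arc from `t` to an endpoint. -/
def IsBlade {F : Type*} [TopologicalSpace F] (t : F) (B : Set F) : Prop :=
  ∃ e ∈ Endpoints F, IsArc B ∧ IsArcEndpoint B t ∧ IsArcEndpoint B e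

/-- A fan is *endpoint-homogeneous* if its homeomorphism group acts transitively on its
endpoints. -/
def EndpointHomogeneous (F : Type*) [TopologicalSpace F] : Prop :=
  ∀ e ∈ Endpoints F, ∀ e' ∈ Endpoints F, ∃ h : F ≃ₜ F, h e = e'

/-- `F` (a fan with top `t`) is *X-endpoint-generated*: for every blade `B` there is a
homeomorphism `φ : [0,1] → B` with `φ(0) = t` and `φ[X] = B ∩ closure(E(F) \ B)`. -/
def IsXEPG {F : Type*} [TopologicalSpace F] (t : F) (X : Set ℝ) : Prop :=
  ∀ B : Set F, IsBlade t B → ∃ φ : (Set.Icc (0:ℝ) 1) ≃ₜ B,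
    ((φ ⟨0, by norm_num⟩ : B) : F) = t ∧
    Subtype.val '' (φ '' {x : Set.Icc (0:ℝ) 1 | (x : ℝ) ∈ X}) =
      B ∩ closure (Endpoints F \ B)

/-! ### Auxiliary machinery -/

open Topology

section Aux

/-- An embedding restricted to a subset gives a homeomorphism onto the image. -/
noncomputable def embHomeo {F G : Type*} [TopologicalSpace F] [TopologicalSpace G]
    {f : F → G} (hf : IsEmbedding f) (s : Set F) : s ≃ₜ (f '' s) :=
  (IsEmbedding.toHomeomorph (hf.comp IsEmbedding.subtypeVal)).trans
    (Homeomorph.setCongr (by rw [Set.range_comp, Subtype.range_val]))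

lemma icc_diff_preconnected_iff {c : ℝ} (hc : c ∈ Icc (0:ℝ) 1) :
    IsPreconnected (Icc (0:ℝ) 1 \ {c}) ↔ c = 0 ∨ c = 1 := by
  constructor
  · intro h
    by_contra hne
    push_neg at hne
    have h0 : (0:ℝ) ∈ Icc (0:ℝ) 1 \ {c} := ⟨by norm_num, fun h => hne.1 h.symm⟩
    have h1 : (1:ℝ) ∈ Icc (0:ℝ) 1 \ {c} := ⟨by norm_num, fun h => hne.2 h.symm⟩
    exact (h.ordConnected.out h0 h1 hc).2 rfl
  · rintro (rfl | rfl)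
    · rw [Icc_diff_left]; exact isPreconnected_Ioc
    · rw [Icc_sdiff_right]; exact isPreconnected_Ico

lemma image_compl_singleton {F : Type*} (s : Set F) (x : s) :
    Subtype.val '' ({x}ᶜ : Set s) = s \ {(x : F)} := by
  ext y
  simp only [mem_image, mem_compl_iff, mem_singleton_iff, mem_diff]
  constructor
  · rintro ⟨a, ha, rfl⟩; exact ⟨a.2, fun h => ha (Subtype.ext h)⟩
  · rintro ⟨hy, hne⟩; exact ⟨⟨y, hy⟩, fun h => hne (congrArg Subtype.val h), rfl⟩

lemma homeo_image_compl_singleton {F G : Type*} [TopologicalSpace F] [TopologicalSpace G]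
    (g : F ≃ₜ G) (a : F) : g '' ({a}ᶜ) = ({g a}ᶜ : Set G) := by
  rw [← Set.image_singleton]
  exact (Equiv.image_compl g.toEquiv _).trans rfl

lemma arcEndpoint_iff {F : Type*} [TopologicalSpace F] {A : Set F}
    (ψ : A ≃ₜ Set.Icc (0:ℝ) 1) {e : F} (he : e ∈ A) :
    IsArcEndpoint A e ↔ ((ψ ⟨e, he⟩ : ℝ) = 0 ∨ (ψ ⟨e, he⟩ : ℝ) = 1) := by
  rw [← icc_diff_preconnected_iff (ψ ⟨e, he⟩).2]
  have h1 : A \ {e} = Subtype.val '' ({(⟨e, he⟩ : A)}ᶜ : Set A) :=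
    (image_compl_singleton A ⟨e, he⟩).symm
  have h2 : Icc (0:ℝ) 1 \ {(ψ ⟨e, he⟩ : ℝ)} =
      Subtype.val '' ({ψ ⟨e, he⟩}ᶜ : Set (Icc (0:ℝ) 1)) :=
    (image_compl_singleton _ _).symm
  have h3 : ψ '' ({(⟨e, he⟩ : A)}ᶜ : Set A) = ({ψ ⟨e, he⟩}ᶜ : Set (Icc (0:ℝ) 1)) :=
    homeo_image_compl_singleton ψ _
  constructor
  · rintro ⟨-, h⟩
    rw [h1, IsInducing.subtypeVal.isPreconnected_image, ← ψ.isPreconnected_image, h3,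
      ← IsInducing.subtypeVal.isPreconnected_image] at h
    rwa [h2]
  · intro h
    refine ⟨he, ?_⟩
    rw [h2, IsInducing.subtypeVal.isPreconnected_image, ← h3, ψ.isPreconnected_image,
      ← IsInducing.subtypeVal.isPreconnected_image] at h
    rwa [h1]

variable {F G : Type*} [TopologicalSpace F] [TopologicalSpace G]

lemma IsArc.isSubcontinuum {A : Set F} (hA : IsArc A) : IsSubcontinuum A := by
  obtain ⟨ψ⟩ := hA
  have hc : CompactSpace A := ψ.symm.compactSpace
  have hicc : ConnectedSpace (Icc (0:ℝ) 1) :=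
    Subtype.connectedSpace ⟨⟨0, by norm_num⟩, isPreconnected_Icc⟩
  have hconn : ConnectedSpace A := ψ.symm.surjective.connectedSpace ψ.symm.continuous
  exact ⟨isCompact_iff_compactSpace.mpr hc, isConnected_iff_connectedSpace.mpr hconn⟩

lemma arc_subset {A B : Set F} {x y : F} (hxy : x ≠ y)
    (hA : IsArc A) (hAx : IsArcEndpoint A x) (hAy : IsArcEndpoint A y)
    (hxB : x ∈ B) (hyB : y ∈ B) (hconn : IsConnected (A ∩ B)) : A ⊆ B := by
  obtain ⟨ψ⟩ := hA
  set S : Set A := Subtype.val ⁻¹' (A ∩ B) with hS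
  have hvS : Subtype.val '' S = A ∩ B := by
    rw [hS, Subtype.image_preimage_coe]
    exact inter_eq_self_of_subset_right inter_subset_left
  have hSpre : IsPreconnected S := by
    rw [← IsInducing.subtypeVal.isPreconnected_image, hvS]
    exact hconn.isPreconnected
  set T : Set ℝ := Subtype.val '' (ψ '' S) with hT
  have hTpre : IsPreconnected T :=
    ((hSpre.image _ ψ.continuous.continuousOn).image _ continuous_subtype_val.continuousOn)
  have hxA : x ∈ A := hAx.1
  have hyA : y ∈ A := hAy.1
  have hxT : (ψ ⟨x, hxA⟩ : ℝ) ∈ T :=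
    ⟨ψ ⟨x, hxA⟩, ⟨⟨x, hxA⟩, ⟨hxA, hxB⟩, rfl⟩, rfl⟩
  have hyT : (ψ ⟨y, hyA⟩ : ℝ) ∈ T :=
    ⟨ψ ⟨y, hyA⟩, ⟨⟨y, hyA⟩, ⟨hyA, hyB⟩, rfl⟩, rfl⟩
  have hxv := (arcEndpoint_iff ψ hxA).mp hAx
  have hyv := (arcEndpoint_iff ψ hyA).mp hAy
  have hne : (ψ ⟨x, hxA⟩ : ℝ) ≠ (ψ ⟨y, hyA⟩ : ℝ) := by
    intro h
    exact hxy (congrArg Subtype.val (ψ.injective (Subtype.ext h)))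
  have h01 : (0:ℝ) ∈ T ∧ (1:ℝ) ∈ T := by
    rcases hxv with h | h <;> rcases hyv with h' | h'
    · exact absurd (h.trans h'.symm) hne
    · exact ⟨h ▸ hxT, h' ▸ hyT⟩
    · exact ⟨h' ▸ hyT, h ▸ hxT⟩
    · exact absurd (h.trans h'.symm) hne
  have hTicc : Icc (0:ℝ) 1 ⊆ T := hTpre.ordConnected.out h01.1 h01.2
  intro a ha
  have hmem : (ψ ⟨a, ha⟩ : ℝ) ∈ T := hTicc (ψ ⟨a, ha⟩).2
  obtain ⟨u, ⟨v, hv, rfl⟩, huv⟩ := hmem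
  have : v = ⟨a, ha⟩ := ψ.injective (Subtype.ext huv)
  rw [this] at hv
  exact hv.2

lemma arc_unique {A B : Set F} {x y : F} (hxy : x ≠ y)
    (hA : IsArc A) (hAx : IsArcEndpoint A x) (hAy : IsArcEndpoint A y)
    (hB : IsArc B) (hBx : IsArcEndpoint B x) (hBy : IsArcEndpoint B y)
    (hconn : IsConnected (A ∩ B)) : A = B :=
  Subset.antisymm
    (arc_subset hxy hA hAx hAy hBx.1 hBy.1 hconn)
    (arc_subset hxy hB hBx hBy hAx.1 hAy.1 (by rwa [inter_comm]))

lemma IsArc.image (h : F ≃ₜ G) {A : Set F} (hA : IsArc A) : IsArc (h '' A) := by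
  obtain ⟨ψ⟩ := hA
  exact ⟨(h.image A).symm.trans ψ⟩

lemma IsArcEndpoint.image (h : F ≃ₜ G) {A : Set F} {e : F} (he : IsArcEndpoint A e) :
    IsArcEndpoint (h '' A) (h e) := by
  refine ⟨mem_image_of_mem _ he.1, ?_⟩
  have hh : h '' A \ {h e} = h '' (A \ {e}) := by
    rw [image_diff h.injective, image_singleton]
  rw [hh, h.isPreconnected_image]
  exact he.2

lemma endpoints_image (h : F ≃ₜ G) {x : F} (hx : x ∈ Endpoints F) : h x ∈ Endpoints G := by
  intro A hA hxA
  have hA' : IsArc (h.symm '' A) := hA.image h.symm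
  have hx' : x ∈ h.symm '' A := ⟨h x, hxA, h.symm_apply_apply x⟩
  have hpc := hx _ hA' hx'
  have himg : h '' (h.symm '' A \ {x}) = A \ {h x} := by
    rw [image_diff h.injective, image_singleton, Homeomorph.image_symm,
      image_preimage_eq _ h.surjective]
  rw [← himg, h.isPreconnected_image]
  exact hpc

lemma HasThreeComponents.image (h : F ≃ₜ G) {S : Set F} (hS : HasThreeComponents S) :
    HasThreeComponents (h '' S) := by
  obtain ⟨C, hinj, hw, hsurj⟩ := hS
  refine ⟨fun i => h '' C i, fun i j hij => hinj (Set.image_injective.mpr h.injective hij),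
    fun i => ?_, fun y hy => ?_⟩
  · obtain ⟨y, hyS, hCi⟩ := hw i
    exact ⟨h y, mem_image_of_mem _ hyS, by
      show h '' C i = _; rw [hCi, h.image_connectedComponentIn hyS]⟩
  · obtain ⟨z, hz, rfl⟩ := hy
    obtain ⟨i, hi⟩ := hsurj z hz
    exact ⟨i, by rw [← h.image_connectedComponentIn hz, hi]⟩

lemma IsRamificationPoint.image (h : F ≃ₜ G) {x : F} (hx : IsRamificationPoint x) :
    IsRamificationPoint (h x) := by
  obtain ⟨T, ⟨g⟩, hxT, h3⟩ := hx
  refine ⟨h '' T, ⟨(h.image T).symm.trans g⟩, mem_image_of_mem _ hxT, ?_⟩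
  have hh : h '' T \ {h x} = h '' (T \ {x}) := by
    rw [image_diff h.injective, image_singleton]
  rw [hh]
  exact h3.image h

lemma not_threeComponents_of_two {S U V : Set F}
    (hS : S = U ∪ V) (hU : IsPreconnected U) (hV : IsPreconnected V) :
    ¬ HasThreeComponents S := by
  classical
  rintro ⟨C, hinj, hw, -⟩
  choose y hy hC using hw
  have key : ∀ i j : Fin 3, y i ∈ U → y j ∈ U → C i = C j := by
    intro i j hi hj
    have h1 : U ⊆ connectedComponentIn S (y i) :=
      hU.subset_connectedComponentIn hi (hS ▸ subset_union_left)
    rw [hC i, hC j, connectedComponentIn_eq (h1 hj)]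
  have keyV : ∀ i j : Fin 3, y i ∈ V → y j ∈ V → C i = C j := by
    intro i j hi hj
    have h1 : V ⊆ connectedComponentIn S (y i) :=
      hV.subset_connectedComponentIn hi (hS ▸ subset_union_right)
    rw [hC i, hC j, connectedComponentIn_eq (h1 hj)]
  obtain ⟨i, j, hij, heq⟩ := Fintype.exists_ne_map_eq_of_card_lt
    (fun i : Fin 3 => decide (y i ∈ U)) (by simp)
  simp only [decide_eq_decide] at heq
  by_cases hiU : y i ∈ U
  · exact hij (hinj (key i j hiU (heq.mp hiU)))
  · have hiV : y i ∈ V := (hS ▸ hy i).resolve_left hiU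
    have hjV : y j ∈ V := (hS ▸ hy j).resolve_left (fun h => hiU (heq.mpr h))
    exact hij (hinj (keyV i j hiV hjV))

end Aux

lemma stdTriod_two_components {p : ℝ × ℝ} (hp : p ∈ stdTriod) (hp0 : p ≠ ((0:ℝ), (0:ℝ))) :
    ∃ U V : Set (ℝ × ℝ), stdTriod \ {p} = U ∪ V ∧ IsPreconnected U ∧ IsPreconnected V := by
  obtain ⟨x, y⟩ := p
  rcases hp with ⟨hx, hy⟩ | ⟨hx, hy⟩
  · simp only [mem_singleton_iff] at hy
    subst hy
    obtain ⟨hx1, hx2⟩ : -1 ≤ x ∧ x ≤ 1 := hx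
    have hx0 : x ≠ 0 := fun h => hp0 (by rw [h])
    rcases hx0.lt_or_gt with hneg | hpos
    · refine ⟨(Ioc x 1 ×ˢ ({0} : Set ℝ)) ∪ ({0} : Set ℝ) ×ˢ Icc (0:ℝ) 1,
        Ico (-1) x ×ˢ ({0} : Set ℝ), ?_, ?_, ?_⟩
      · ext ⟨a, b⟩
        simp only [stdTriod, mem_diff, mem_union, mem_prod, mem_Icc, mem_Ico, mem_Ioc,
          mem_singleton_iff, Prod.mk.injEq]
        constructor
        · rintro ⟨⟨⟨ha, hb⟩, rfl⟩ | ⟨rfl, hb⟩, hne⟩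
          · rcases lt_or_gt_of_ne (fun h : a = x => hne ⟨h, rfl⟩) with h | h
            · exact Or.inr ⟨⟨ha, h⟩, rfl⟩
            · exact Or.inl (Or.inl ⟨⟨h, hb⟩, rfl⟩)
          · exact Or.inl (Or.inr ⟨rfl, hb⟩)
        · rintro (⟨⟨ha, rfl⟩ | ⟨rfl, hb⟩⟩ | ⟨⟨ha, hab⟩, rfl⟩)
          · exact ⟨Or.inl ⟨⟨by linarith [ha.1], ha.2⟩, rfl⟩, by rintro ⟨rfl, -⟩; linarith [ha.1]⟩
          · exact ⟨Or.inr ⟨rfl, hb⟩, by rintro ⟨rfl, -⟩; exact hx0 rfl⟩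
          · exact ⟨Or.inl ⟨⟨ha, by linarith⟩, rfl⟩, by rintro ⟨rfl, -⟩; linarith⟩
      · refine IsPreconnected.union ((0:ℝ), (0:ℝ)) ⟨⟨hneg, by norm_num⟩, rfl⟩
          ⟨rfl, by norm_num, by norm_num⟩ (isPreconnected_Ioc.prod isPreconnected_singleton)
          (isPreconnected_singleton.prod isPreconnected_Icc)
      · exact isPreconnected_Ico.prod isPreconnected_singleton
    · refine ⟨(Ico (-1) x ×ˢ ({0} : Set ℝ)) ∪ ({0} : Set ℝ) ×ˢ Icc (0:ℝ) 1,
        Ioc x 1 ×ˢ ({0} : Set ℝ), ?_, ?_, ?_⟩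
      · ext ⟨a, b⟩
        simp only [stdTriod, mem_diff, mem_union, mem_prod, mem_Icc, mem_Ico, mem_Ioc,
          mem_singleton_iff, Prod.mk.injEq]
        constructor
        · rintro ⟨⟨⟨ha, hb⟩, rfl⟩ | ⟨rfl, hb⟩, hne⟩
          · rcases lt_or_gt_of_ne (fun h : a = x => hne ⟨h, rfl⟩) with h | h
            · exact Or.inl (Or.inl ⟨⟨ha, h⟩, rfl⟩)
            · exact Or.inr ⟨⟨h, hb⟩, rfl⟩
          · exact Or.inl (Or.inr ⟨rfl, hb⟩)
        · rintro (⟨⟨ha, rfl⟩ | ⟨rfl, hb⟩⟩ | ⟨⟨ha, hab⟩, rfl⟩)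
          · exact ⟨Or.inl ⟨⟨ha.1, by linarith [ha.2]⟩, rfl⟩, by rintro ⟨rfl, -⟩; linarith [ha.2]⟩
          · exact ⟨Or.inr ⟨rfl, hb⟩, by rintro ⟨rfl, -⟩; exact hx0 rfl⟩
          · exact ⟨Or.inl ⟨⟨by linarith, hab⟩, rfl⟩, by rintro ⟨rfl, -⟩; linarith⟩
      · refine IsPreconnected.union ((0:ℝ), (0:ℝ)) ⟨⟨by norm_num, hpos⟩, rfl⟩
          ⟨rfl, by norm_num, by norm_num⟩ (isPreconnected_Ico.prod isPreconnected_singleton)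
          (isPreconnected_singleton.prod isPreconnected_Icc)
      · exact isPreconnected_Ioc.prod isPreconnected_singleton
  · simp only [mem_singleton_iff] at hx
    subst hx
    obtain ⟨hy1, hy2⟩ : 0 ≤ y ∧ y ≤ 1 := hy
    have hy0 : y ≠ 0 := fun h => hp0 (by rw [h])
    have hypos : 0 < y := lt_of_le_of_ne hy1 (Ne.symm hy0)
    refine ⟨(Icc (-1:ℝ) 1 ×ˢ ({0} : Set ℝ)) ∪ ({0} : Set ℝ) ×ˢ Ico (0:ℝ) y,
      ({0} : Set ℝ) ×ˢ Ioc y 1, ?_, ?_, ?_⟩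
    · ext ⟨a, b⟩
      simp only [stdTriod, mem_diff, mem_union, mem_prod, mem_Icc, mem_Ico, mem_Ioc,
        mem_singleton_iff, Prod.mk.injEq]
      constructor
      · rintro ⟨⟨⟨ha, hb⟩, rfl⟩ | ⟨rfl, hb⟩, hne⟩
        · exact Or.inl (Or.inl ⟨⟨ha, hb⟩, rfl⟩)
        · rcases lt_or_gt_of_ne (fun h : b = y => hne ⟨rfl, h⟩) with h | h
          · exact Or.inl (Or.inr ⟨rfl, hb.1, h⟩)
          · exact Or.inr ⟨rfl, h, hb.2⟩
      · rintro (⟨⟨ha, rfl⟩ | ⟨rfl, hb⟩⟩ | ⟨rfl, hb⟩)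
        · exact ⟨Or.inl ⟨ha, rfl⟩, by rintro ⟨-, rfl⟩; exact hy0 rfl⟩
        · exact ⟨Or.inr ⟨rfl, hb.1, by linarith [hb.2]⟩, by rintro ⟨-, rfl⟩; linarith [hb.2]⟩
        · exact ⟨Or.inr ⟨rfl, by linarith [hb.1], hb.2⟩, by rintro ⟨-, rfl⟩; linarith [hb.1]⟩
    · refine IsPreconnected.union ((0:ℝ), (0:ℝ)) ⟨⟨by norm_num, by norm_num⟩, rfl⟩
        ⟨rfl, le_refl 0, hypos⟩ (isPreconnected_Icc.prod isPreconnected_singleton)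
        (isPreconnected_singleton.prod isPreconnected_Ico)
    · exact isPreconnected_singleton.prod isPreconnected_Ioc

/-- The horizontal bar of the standard triod, homeomorphic to `[-1,1]` via `fst`. -/
def barFstHomeo : ((Icc (-1:ℝ) 1) ×ˢ ({0} : Set ℝ) : Set (ℝ × ℝ)) ≃ₜ (Icc (-1:ℝ) 1) where
  toFun q := ⟨q.1.1, q.2.1⟩
  invFun x := ⟨(x.1, 0), ⟨x.2, rfl⟩⟩
  left_inv q := Subtype.ext (Prod.ext rfl q.2.2.symm)
  right_inv x := rfl
  continuous_toFun := Continuous.subtype_mk (continuous_fst.comp continuous_subtype_val) _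
  continuous_invFun := Continuous.subtype_mk (continuous_subtype_val.prodMk continuous_const) _

/-- The reflection `x ↦ 1 - x` of `[0,1]`. -/
def iccRefl : (Icc (0:ℝ) 1) ≃ₜ (Icc (0:ℝ) 1) where
  toFun x := ⟨1 - x.1, ⟨by linarith [x.2.2], by linarith [x.2.1]⟩⟩
  invFun x := ⟨1 - x.1, ⟨by linarith [x.2.2], by linarith [x.2.1]⟩⟩
  left_inv x := Subtype.ext (by dsimp; ring)
  right_inv x := Subtype.ext (by dsimp; ring)
  continuous_toFun := Continuous.subtype_mk (continuous_const.sub continuous_subtype_val) _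
  continuous_invFun := Continuous.subtype_mk (continuous_const.sub continuous_subtype_val) _

lemma not_endpoint_of_ramification {F : Type*} [TopologicalSpace F] {x : F}
    (hx : IsRamificationPoint x) : x ∉ Endpoints F := by
  obtain ⟨T, ⟨g⟩, hxT, h3⟩ := hx
  intro hend
  have hporigin : ((g ⟨x, hxT⟩ : stdTriod) : ℝ × ℝ) = ((0:ℝ), (0:ℝ)) := by
    by_contra hne
    obtain ⟨U, V, hUV, hU, hV⟩ := stdTriod_two_components (g ⟨x, hxT⟩).2 hne
    have hUsub : U ⊆ stdTriod :=
      (subset_union_left.trans hUV.superset).trans diff_subset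
    have hVsub : V ⊆ stdTriod :=
      (subset_union_right.trans hUV.superset).trans diff_subset
    have hUp : IsPreconnected (Subtype.val ⁻¹' U : Set stdTriod) := by
      rw [← IsInducing.subtypeVal.isPreconnected_image, Subtype.image_preimage_coe,
        inter_eq_self_of_subset_right hUsub]
      exact hU
    have hVp : IsPreconnected (Subtype.val ⁻¹' V : Set stdTriod) := by
      rw [← IsInducing.subtypeVal.isPreconnected_image, Subtype.image_preimage_coe,
        inter_eq_self_of_subset_right hVsub]
      exact hV
    have hU' : IsPreconnected
        (Subtype.val '' (g.symm '' (Subtype.val ⁻¹' U : Set stdTriod))) :=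
      (hUp.image _ g.symm.continuous.continuousOn).image _ continuous_subtype_val.continuousOn
    have hV' : IsPreconnected
        (Subtype.val '' (g.symm '' (Subtype.val ⁻¹' V : Set stdTriod))) :=
      (hVp.image _ g.symm.continuous.continuousOn).image _ continuous_subtype_val.continuousOn
    have hpre : (Subtype.val ⁻¹' U : Set stdTriod) ∪ (Subtype.val ⁻¹' V) =
        ({g ⟨x, hxT⟩}ᶜ : Set stdTriod) := by
      ext z
      simp only [mem_union, mem_preimage, mem_compl_iff, mem_singleton_iff]
      constructor
      · rintro (hz | hz)
        · intro hzeq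
          have : (z : ℝ × ℝ) ∈ stdTriod \ {((g ⟨x, hxT⟩ : stdTriod) : ℝ × ℝ)} :=
            hUV.superset (Or.inl hz)
          exact this.2 (by rw [hzeq]; exact rfl)
        · intro hzeq
          have : (z : ℝ × ℝ) ∈ stdTriod \ {((g ⟨x, hxT⟩ : stdTriod) : ℝ × ℝ)} :=
            hUV.superset (Or.inr hz)
          exact this.2 (by rw [hzeq]; exact rfl)
      · intro hzne
        have : (z : ℝ × ℝ) ∈ U ∪ V := by
          rw [← hUV]
          exact ⟨z.2, fun h => hzne (Subtype.ext h)⟩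
        exact this
    have hdecomp : T \ {x} =
        (Subtype.val '' (g.symm '' (Subtype.val ⁻¹' U : Set stdTriod))) ∪
        (Subtype.val '' (g.symm '' (Subtype.val ⁻¹' V : Set stdTriod))) := by
      rw [← image_union, ← image_union, hpre, homeo_image_compl_singleton g.symm,
        g.symm_apply_apply, image_compl_singleton]
    exact not_threeComponents_of_two hdecomp hU' hV' h3
  -- `x` corresponds to the branch point; produce an arc through it
  set bar : Set (ℝ × ℝ) := (Icc (-1:ℝ) 1) ×ˢ ({0} : Set ℝ) with hbar
  have hbarsub : bar ⊆ stdTriod := subset_union_left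
  have hval : Subtype.val '' (Subtype.val ⁻¹' bar : Set stdTriod) = bar := by
    rw [Subtype.image_preimage_coe, inter_eq_self_of_subset_right hbarsub]
  have hAarc : IsArc (Subtype.val '' (g.symm '' (Subtype.val ⁻¹' bar : Set stdTriod))) :=
    ⟨((embHomeo IsEmbedding.subtypeVal (g.symm '' (Subtype.val ⁻¹' bar : Set stdTriod))).symm.trans
      ((g.symm.image (Subtype.val ⁻¹' bar : Set stdTriod)).symm.trans
        ((embHomeo IsEmbedding.subtypeVal (Subtype.val ⁻¹' bar : Set stdTriod)).trans
          (Homeomorph.setCongr hval)))).trans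
      (barFstHomeo.trans (iccHomeoI (-1 : ℝ) 1 (by norm_num)))⟩
  have hpmem : g ⟨x, hxT⟩ ∈ (Subtype.val ⁻¹' bar : Set stdTriod) := by
    show ((g ⟨x, hxT⟩ : stdTriod) : ℝ × ℝ) ∈ bar
    rw [hporigin]
    exact ⟨⟨by norm_num, by norm_num⟩, rfl⟩
  have hxA : x ∈ Subtype.val '' (g.symm '' (Subtype.val ⁻¹' bar : Set stdTriod)) :=
    ⟨⟨x, hxT⟩, ⟨g ⟨x, hxT⟩, hpmem, g.symm_apply_apply _⟩, rfl⟩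
  have hpre := hend _ hAarc hxA
  have h1 : Subtype.val '' ((g.symm '' (Subtype.val ⁻¹' bar : Set stdTriod)) \ {⟨x, hxT⟩}) =
      (Subtype.val '' (g.symm '' (Subtype.val ⁻¹' bar : Set stdTriod))) \ {x} := by
    rw [image_diff Subtype.val_injective, image_singleton]
  have h2 : (g.symm '' (Subtype.val ⁻¹' bar : Set stdTriod)) \ {⟨x, hxT⟩} =
      g.symm '' ((Subtype.val ⁻¹' bar : Set stdTriod) \ {g ⟨x, hxT⟩}) := by
    rw [image_diff g.symm.injective, image_singleton, g.symm_apply_apply]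
  rw [← h1, IsInducing.subtypeVal.isPreconnected_image, h2] at hpre
  have hpre2 : IsPreconnected ((Subtype.val ⁻¹' bar : Set stdTriod) \ {g ⟨x, hxT⟩}) := by
    have himg := hpre.image g g.continuous.continuousOn
    rwa [Homeomorph.image_symm, image_preimage_eq _ g.surjective] at himg
  have hpre3 : IsPreconnected (bar \ {((0:ℝ), (0:ℝ))}) := by
    have himg := hpre2.image Subtype.val continuous_subtype_val.continuousOn
    rwa [image_diff Subtype.val_injective, image_singleton, hval, hporigin] at himg
  have hpre4 := hpre3.image Prod.fst continuous_fst.continuousOn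
  have himg2 : Prod.fst '' (bar \ {((0:ℝ), (0:ℝ))}) = Icc (-1:ℝ) 1 \ {0} := by
    ext a
    constructor
    · rintro ⟨⟨u, v⟩, ⟨⟨hu, hv⟩, hne⟩, rfl⟩
      have hv0 : v = 0 := hv
      subst hv0
      refine ⟨hu, fun h => hne ?_⟩
      have hu0 : u = 0 := h
      rw [hu0]
      rfl
    · rintro ⟨ha, hne⟩
      refine ⟨(a, 0), ⟨⟨ha, rfl⟩, fun h => hne ?_⟩, rfl⟩
      have : a = 0 := congrArg Prod.fst h
      rw [this]
      rfl
  rw [himg2] at hpre4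
  have hfinal := hpre4.ordConnected.out
    (⟨⟨le_refl _, by norm_num⟩, by norm_num⟩ : (-1:ℝ) ∈ Icc (-1:ℝ) 1 \ {0})
    (⟨⟨by norm_num, le_refl _⟩, by norm_num⟩ : (1:ℝ) ∈ Icc (-1:ℝ) 1 \ {0})
    (⟨by norm_num, by norm_num⟩ : (0:ℝ) ∈ Icc (-1:ℝ) 1)
  exact hfinal.2 rfl

/-- Every endpoint-homogeneous fan is `X`-endpoint-generated for some `X ⊆ [0,1]`. -/
theorem endpointHomogeneous_isXEPG
    (F : Type*) [TopologicalSpace F] (t : F) (hF : IsFan F t)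
    (hhom : EndpointHomogeneous F) :
    ∃ X : Set ℝ, X ⊆ Set.Icc 0 1 ∧ IsXEPG t X := by
  classical
  obtain ⟨hdend, hram, huniq⟩ := hF
  by_cases hex : ∃ B : Set F, IsBlade t B
  · obtain ⟨B0, hB0⟩ := hex
    obtain ⟨e0, he0E, hB0arc, hB0t, hB0e⟩ := hB0
    have htne : t ∉ Endpoints F := not_endpoint_of_ramification hram
    obtain ⟨ψ0⟩ := id hB0arc
    have hφ0 : ∃ φ0 : (Icc (0:ℝ) 1) ≃ₜ B0, ((φ0 ⟨0, by norm_num⟩ : B0) : F) = t := by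
      rcases (arcEndpoint_iff ψ0 hB0t.1).mp hB0t with h0 | h1
      · refine ⟨ψ0.symm, ?_⟩
        have heq : (⟨0, by norm_num⟩ : Icc (0:ℝ) 1) = ψ0 ⟨t, hB0t.1⟩ := Subtype.ext h0.symm
        rw [heq, ψ0.symm_apply_apply]
      · refine ⟨iccRefl.trans ψ0.symm, ?_⟩
        show ((ψ0.symm (iccRefl ⟨0, by norm_num⟩) : B0) : F) = t
        have heq : iccRefl (⟨0, by norm_num⟩ : Icc (0:ℝ) 1) = ψ0 ⟨t, hB0t.1⟩ :=
          Subtype.ext (by show (1:ℝ) - 0 = _; rw [h1]; norm_num)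
        rw [heq, ψ0.symm_apply_apply]
    obtain ⟨φ0, hφ0t⟩ := hφ0
    set X : Set ℝ := {x : ℝ | ∃ hx : x ∈ Icc (0:ℝ) 1,
        ((φ0 ⟨x, hx⟩ : B0) : F) ∈ closure (Endpoints F \ B0)} with hXdef
    have hXsub : X ⊆ Icc (0:ℝ) 1 := by
      intro x hx
      rw [hXdef] at hx
      obtain ⟨hx1, -⟩ := hx
      exact hx1
    refine ⟨X, hXsub, ?_⟩
    intro B hB
    obtain ⟨e, heE, hBarc, hBt, hBe⟩ := hB
    obtain ⟨h, hh⟩ := hhom e0 he0E e heE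
    have hht : h t = t := huniq _ (hram.image h)
    have hEimg : h '' Endpoints F = Endpoints F := by
      apply Subset.antisymm
      · rintro y ⟨z, hz, rfl⟩
        exact endpoints_image h hz
      · intro y hy
        exact ⟨h.symm y, endpoints_image h.symm hy, h.apply_symm_apply y⟩
    have hte : t ≠ e := fun hq => htne (hq ▸ heE)
    have himt : IsArcEndpoint (h '' B0) t := by
      have := hB0t.image h; rwa [hht] at this
    have hime : IsArcEndpoint (h '' B0) e := by
      have := hB0e.image h; rwa [hh] at this
    have hBeq : h '' B0 = B := by
      apply arc_unique hte (hB0arc.image h) himt hime hBarc hBt hBe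
      have hsub1 := (hB0arc.image h).isSubcontinuum
      have hsub2 := hBarc.isSubcontinuum
      have hsubU : IsSubcontinuum (h '' B0 ∪ B) :=
        ⟨hsub1.1.union hsub2.1, hsub1.2.union ⟨t, himt.1, hBt.1⟩ hsub2.2⟩
      exact hdend.2.2 _ _ _ hsubU hsub1 hsub2 rfl
    let χ : (B0 : Set F) ≃ₜ B := (h.image B0).trans (Homeomorph.setCongr hBeq)
    have hχ : ∀ b : B0, ((χ b : B) : F) = h (b : F) := fun b => rfl
    refine ⟨φ0.trans χ, ?_, ?_⟩
    · show ((χ (φ0 ⟨0, by norm_num⟩) : B) : F) = t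
      rw [hχ, hφ0t, hht]
    · have hset0 : Subtype.val '' (φ0 '' {x : Icc (0:ℝ) 1 | (x:ℝ) ∈ X}) =
          B0 ∩ closure (Endpoints F \ B0) := by
        ext z
        constructor
        · rintro ⟨b, ⟨u, hu, rfl⟩, rfl⟩
          have hu' : (u : ℝ) ∈ X := hu
          rw [hXdef] at hu'
          obtain ⟨hxm, hmem⟩ := hu'
          have heq : (⟨(u:ℝ), hxm⟩ : Icc (0:ℝ) 1) = u := Subtype.ext rfl
          rw [heq] at hmem
          exact ⟨(φ0 u).2, hmem⟩
        · rintro ⟨hzB0, hzc⟩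
          refine ⟨φ0 (φ0.symm ⟨z, hzB0⟩), ⟨φ0.symm ⟨z, hzB0⟩, ?_, rfl⟩,
            by rw [φ0.apply_symm_apply]⟩
          show ((φ0.symm ⟨z, hzB0⟩ : Icc (0:ℝ) 1) : ℝ) ∈ X
          rw [hXdef]
          refine ⟨(φ0.symm ⟨z, hzB0⟩).2, ?_⟩
          have heq : (⟨((φ0.symm ⟨z, hzB0⟩ : Icc (0:ℝ) 1) : ℝ),
              (φ0.symm ⟨z, hzB0⟩).2⟩ : Icc (0:ℝ) 1) = φ0.symm ⟨z, hzB0⟩ := Subtype.ext rfl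
          rw [heq, φ0.apply_symm_apply]
          exact hzc
      have hcomp : ∀ S : Set (Icc (0:ℝ) 1), Subtype.val '' ((φ0.trans χ) '' S) =
          h '' (Subtype.val '' (φ0 '' S)) := by
        intro S
        have e1 : Subtype.val '' ((φ0.trans χ) '' S) =
            (fun u => ((χ (φ0 u) : B) : F)) '' S := by
          rw [image_image]
          rfl
        have e2 : h '' (Subtype.val '' (φ0 '' S)) =
            (fun u => h ((φ0 u : B0) : F)) '' S := by
          rw [image_image, image_image]
        rw [e1, e2]
        exact image_congr fun u _ => hχ (φ0 u)
      rw [hcomp _, hset0, image_inter h.injective, hBeq, h.image_closure,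
        image_diff h.injective, hEimg, hBeq]
  · exact ⟨∅, empty_subset _, fun B hB => absurd ⟨B, hB⟩ hex⟩
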